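/- Let θ : Cl(−Q) → End(Ŵ) be the algebra homomorphism induced by the action of V on Ŵ, and let ι : V → Cl(−Q) be the canonical embedding. For every nonzero c ∈ ℂ and all x, y ∈ Ŵ with Q̂(x) = Q̂(y) = c, there exists an invertible element g of the even Clifford subalgebra of Cl(−Q) satisfying g·reverse(g) = 1 and g·ι(v)·g⁻¹ ∈ ι(V) for all v ∈ V (i.e., g lies in the spin group of −Q), such that θ(g)(x) = y. In other words, for each c ≠ 0 the level set {x ∈ Ŵ : Q̂(x) = c} is a single orbit of the spin group acting on Ŵ via θ. -/

import Mathlib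

namespace SSD

noncomputable section

/-- `V` is the 7-dimensional complex vector space `ℂ^7`. -/
abbrev V7 : Type := Fin 7 → ℂ

/-- `Ŵ` is the 8-dimensional spin space, with basis (in this order):
`1, v̂₅, v̂₆, v̂₇, v̂₅v̂₆, v̂₆v̂₇, v̂₅v̂₇, v̂₅v̂₆v̂₇`. -/
abbrev W8 : Type := Fin 8 → ℂ

/-- The constant `1/√2` as a complex number. -/
def is2 : ℂ := ((Real.sqrt 2 : ℝ) : ℂ)⁻¹

/-- The Clifford action of `v ∈ V` on `x ∈ Ŵ`:  `e₅,e₆,e₇` act by exterior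
multiplication by `v̂₅,v̂₆,v̂₇`; `e₁,e₂,e₃` act by `−∂/∂v̂₇, ∂/∂v̂₆, −∂/∂v̂₅`;
`e₄` acts by `(1/√2)·(−1)^deg`. Written out in coordinates. -/
def actFun (v : V7) (x : W8) : W8 := fun k =>
  match k with
  | 0 => -(v 0) * x 3 + v 1 * x 2 - v 2 * x 1 + is2 * v 3 * x 0
  | 1 => v 0 * x 6 - v 1 * x 4 - is2 * v 3 * x 1 + v 4 * x 0
  | 2 => v 0 * x 5 - v 2 * x 4 - is2 * v 3 * x 2 + v 5 * x 0
  | 3 => v 1 * x 5 - v 2 * x 6 - is2 * v 3 * x 3 + v 6 * x 0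
  | 4 => -(v 0) * x 7 + is2 * v 3 * x 4 + v 4 * x 2 - v 5 * x 1
  | 5 => -(v 2) * x 7 + is2 * v 3 * x 5 + v 5 * x 3 - v 6 * x 2
  | 6 => -(v 1) * x 7 + is2 * v 3 * x 6 + v 4 * x 3 - v 6 * x 1
  | 7 => -(is2 * v 3) * x 7 + v 4 * x 5 - v 5 * x 6 + v 6 * x 4

/-- The action `v · x`, packaged as a bilinear map. -/
def act : V7 →ₗ[ℂ] W8 →ₗ[ℂ] W8 :=
  LinearMap.mk₂ ℂ actFun
    (fun m m' n => by funext k; fin_cases k <;> simp [actFun] <;> ring)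
    (fun c m n => by funext k; fin_cases k <;> simp [actFun] <;> ring)
    (fun m n n' => by funext k; fin_cases k <;> simp [actFun] <;> ring)
    (fun c m n => by funext k; fin_cases k <;> simp [actFun] <;> ring)

/-- The bilinear form `B` on `V`: `B(eᵢ,eⱼ) = (−1)^(i+1)` if `i+j=8`, else `0`. -/
def Bform (u w : V7) : ℂ :=
  u 0 * w 6 + u 6 * w 0 - u 1 * w 5 - u 5 * w 1 + u 2 * w 4 + u 4 * w 2 - u 3 * w 3

/-- The quadratic form `Q(v) = B(v,v)/2` on `V`. -/
def Qform (v : V7) : ℂ := Bform v v / 2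

/-- The quadratic form `Q̂` on `Ŵ`:
`Q̂ = α_∅α₅₆₇ + α₆α₅₇ − α₇α₅₆ − α₆₇α₅` in the coordinates of the basis above. -/
def Qhat (x : W8) : ℂ := x 0 * x 7 + x 2 * x 6 - x 3 * x 4 - x 5 * x 1

/-- The bilinear form `B̂(p,q) = Q̂(p+q) − Q̂(p) − Q̂(q)` on `Ŵ`. -/
def Bhat (p q : W8) : ℂ := Qhat (p + q) - Qhat p - Qhat q

/-- A subspace `U ⊆ V` is isotropic if `B` vanishes identically on it. -/
def IsIsotropic (U : Submodule ℂ V7) : Prop :=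
  ∀ u ∈ U, ∀ w ∈ U, Bform u w = 0

/-- `L_U = {x ∈ Ŵ | u·x = 0 for all u ∈ U}`. -/
def LU (U : Submodule ℂ V7) : Submodule ℂ W8 :=
  ⨅ u ∈ U, LinearMap.ker (act u)

/-- `ψ : Ŵ → V` is an invariant surjection with spinor `p` if `p ≠ 0`, `ψ(p)=0`
and `ψ(v·p) = v` for all `v ∈ V`. -/
def IsInvSurj (ψ : W8 →ₗ[ℂ] V7) (p : W8) : Prop :=
  p ≠ 0 ∧ ψ p = 0 ∧ ∀ v : V7, ψ (act v p) = v

def BL : LinearMap.BilinMap ℂ V7 ℂ :=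
  LinearMap.mk₂ ℂ (fun u w => -(Bform u w) / 2)
    (fun m m' n => by simp [Bform]; ring)
    (fun c m n => by simp [Bform]; ring)
    (fun m n n' => by simp [Bform]; ring)
    (fun c m n => by simp [Bform]; ring)

def negQ : QuadraticForm ℂ V7 := LinearMap.BilinMap.toQuadraticMap BL

theorem is2_mul_is2 : is2 * is2 = 2⁻¹ := by
  have h2 : ((Real.sqrt 2 : ℝ) : ℂ) * ((Real.sqrt 2 : ℝ) : ℂ) = 2 := by
    rw [← Complex.ofReal_mul]
    norm_num [Real.mul_self_sqrt]
  rw [is2, ← mul_inv, h2]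

theorem act_act (v : V7) (x : W8) : act v (act v x) = negQ v • x := by
  have hr := is2_mul_is2
  have hQ : negQ v = -(v 0 * v 6) + v 1 * v 5 - v 2 * v 4 + v 3 * v 3 / 2 := by
    simp [negQ, LinearMap.BilinMap.toQuadraticMap_apply, BL, Bform]
    ring
  funext k
  rw [hQ]
  fin_cases k
  · simp [act, actFun]; linear_combination (x 0 * v 3 * v 3) * hr
  · simp [act, actFun]; linear_combination (x 1 * v 3 * v 3) * hr
  · simp [act, actFun]; linear_combination (x 2 * v 3 * v 3) * hr
  · simp [act, actFun]; linear_combination (x 3 * v 3 * v 3) * hr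
  · simp [act, actFun]; linear_combination (x 4 * v 3 * v 3) * hr
  · simp [act, actFun]; linear_combination (x 5 * v 3 * v 3) * hr
  · simp [act, actFun]; linear_combination (x 6 * v 3 * v 3) * hr
  · simp [act, actFun]; linear_combination (x 7 * v 3 * v 3) * hr

theorem act_sq (v : V7) :
    act v * act v = algebraMap ℂ (Module.End ℂ W8) (negQ v) := by
  apply LinearMap.ext
  intro x
  rw [Module.End.mul_apply, Module.algebraMap_end_apply]
  exact act_act v x

/-- The representation `θ : Cl(−Q) → End(Ŵ)` induced by the action of `V` on `Ŵ`. -/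
def θ : CliffordAlgebra negQ →ₐ[ℂ] Module.End ℂ W8 :=
  CliffordAlgebra.lift negQ ⟨act, act_sq⟩

/-! ### Auxiliary lemmas -/

theorem negQ_eq (v : V7) :
    negQ v = -(v 0 * v 6) + v 1 * v 5 - v 2 * v 4 + v 3 * v 3 / 2 := by
  simp [negQ, LinearMap.BilinMap.toQuadraticMap_apply, BL, Bform]
  ring

theorem Bhat_eq (p q : W8) :
    Bhat p q = p 0 * q 7 + p 7 * q 0 + p 2 * q 6 + p 6 * q 2
      - p 3 * q 4 - p 4 * q 3 - p 5 * q 1 - p 1 * q 5 := by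
  simp [Bhat, Qhat]
  ring

theorem Qhat_smul (a : ℂ) (z : W8) : Qhat (a • z) = a ^ 2 * Qhat z := by
  simp [Qhat]
  ring

theorem Qhat_act (v : V7) (x : W8) : Qhat (act v x) = -negQ v * Qhat x := by
  rw [negQ_eq]
  simp only [act, LinearMap.mk₂_apply, Qhat, actFun]
  linear_combination (-(v 3 * v 3 * x 0 * x 7) + v 3 * v 3 * x 1 * x 5
    - v 3 * v 3 * x 2 * x 6 + v 3 * v 3 * x 3 * x 4) * is2_mul_is2

theorem Bhat_act_self (v : V7) (x : W8) : Bhat (act v x) x = 0 := by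
  rw [Bhat_eq]
  simp only [act, LinearMap.mk₂_apply, actFun]
  ring

/-- The octonion-style cross product `Im(z x̄)` sending a pair of spinors to a vector. -/
def crossV (z x : W8) : V7 := fun i =>
  match i with
  | 0 => z 0 * x 4 + z 1 * x 2 - z 2 * x 1 - z 4 * x 0
  | 1 => z 0 * x 6 + z 1 * x 3 - z 3 * x 1 - z 6 * x 0
  | 2 => z 0 * x 5 + z 2 * x 3 - z 3 * x 2 - z 5 * x 0
  | 3 => is2 * (z 0 * x 7 + z 1 * x 5 - z 2 * x 6 + z 3 * x 4
        - z 4 * x 3 - z 5 * x 1 + z 6 * x 2 - z 7 * x 0)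
  | 4 => z 1 * x 7 + z 4 * x 6 - z 6 * x 4 - z 7 * x 1
  | 5 => z 2 * x 7 + z 4 * x 5 - z 5 * x 4 - z 7 * x 2
  | 6 => z 3 * x 7 - z 5 * x 6 + z 6 * x 5 - z 7 * x 3

theorem act_cross (z x : W8) (h : Bhat z x = 0) :
    act (crossV z x) x = Qhat x • z := by
  rw [Bhat_eq] at h
  funext k
  fin_cases k <;>
    simp [act, actFun, crossV, Qhat]
  · linear_combination (x 0 * (-(x 0 * z 7) - x 1 * z 5 + x 2 * z 6 - x 3 * z 4 + x 4 * z 3 + x 5 * z 1 - x 6 * z 2 + x 7 * z 0)) * is2_mul_is2 + (-(x 0)/2) * h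
  · linear_combination (-(x 1) * (-(x 0 * z 7) - x 1 * z 5 + x 2 * z 6 - x 3 * z 4 + x 4 * z 3 + x 5 * z 1 - x 6 * z 2 + x 7 * z 0)) * is2_mul_is2 + (-(x 1)/2) * h
  · linear_combination (-(x 2) * (-(x 0 * z 7) - x 1 * z 5 + x 2 * z 6 - x 3 * z 4 + x 4 * z 3 + x 5 * z 1 - x 6 * z 2 + x 7 * z 0)) * is2_mul_is2 + (-(x 2)/2) * h
  · linear_combination (-(x 3) * (-(x 0 * z 7) - x 1 * z 5 + x 2 * z 6 - x 3 * z 4 + x 4 * z 3 + x 5 * z 1 - x 6 * z 2 + x 7 * z 0)) * is2_mul_is2 + (-(x 3)/2) * h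
  · linear_combination (x 4 * (-(x 0 * z 7) - x 1 * z 5 + x 2 * z 6 - x 3 * z 4 + x 4 * z 3 + x 5 * z 1 - x 6 * z 2 + x 7 * z 0)) * is2_mul_is2 + (-(x 4)/2) * h
  · linear_combination (x 5 * (-(x 0 * z 7) - x 1 * z 5 + x 2 * z 6 - x 3 * z 4 + x 4 * z 3 + x 5 * z 1 - x 6 * z 2 + x 7 * z 0)) * is2_mul_is2 + (-(x 5)/2) * h
  · linear_combination (x 6 * (-(x 0 * z 7) - x 1 * z 5 + x 2 * z 6 - x 3 * z 4 + x 4 * z 3 + x 5 * z 1 - x 6 * z 2 + x 7 * z 0)) * is2_mul_is2 + (-(x 6)/2) * h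
  · linear_combination (-(x 7) * (-(x 0 * z 7) - x 1 * z 5 + x 2 * z 6 - x 3 * z 4 + x 4 * z 3 + x 5 * z 1 - x 6 * z 2 + x 7 * z 0)) * is2_mul_is2 + (-(x 7)/2) * h

theorem ι_conj (v t : V7) :
    CliffordAlgebra.ι negQ v * CliffordAlgebra.ι negQ t * CliffordAlgebra.ι negQ v
      = CliffordAlgebra.ι negQ (QuadraticMap.polar negQ v t • v - negQ v • t) := by
  rw [map_sub, map_smul, map_smul, CliffordAlgebra.ι_mul_ι_comm, sub_mul, mul_assoc,
    CliffordAlgebra.ι_sq_scalar, ← Algebra.commutes, ← Algebra.smul_def, ← Algebra.smul_def]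

theorem spin_orbit (q : ℂ) (hq : q ≠ 0) (u v : V7) (hu : negQ u = q) (hv : negQ v = q)
    (x y : W8) (key : act u (act v x) = q • y) :
    ∃ g g' : CliffordAlgebra negQ,
      g * g' = 1 ∧ g' * g = 1 ∧
      g ∈ CliffordAlgebra.evenOdd negQ 0 ∧
      g * CliffordAlgebra.reverse g = 1 ∧
      (∀ v : V7, ∃ u : V7,
        g * CliffordAlgebra.ι negQ v * g' = CliffordAlgebra.ι negQ u) ∧
      θ g x = y := by
  have hq2 : q⁻¹ * q⁻¹ * (q * q) = 1 := by field_simp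
  have sq : ∀ a b : V7, negQ a = q → negQ b = q →
      (CliffordAlgebra.ι negQ a * CliffordAlgebra.ι negQ b) *
        (CliffordAlgebra.ι negQ b * CliffordAlgebra.ι negQ a)
        = algebraMap ℂ (CliffordAlgebra negQ) (q * q) := by
    intro a b ha hb
    rw [mul_assoc, ← mul_assoc (CliffordAlgebra.ι negQ b), CliffordAlgebra.ι_sq_scalar, hb,
      ← Algebra.smul_def, mul_smul_comm, CliffordAlgebra.ι_sq_scalar, ha,
      Algebra.smul_def, ← map_mul]
  have smulmul : ∀ A B : CliffordAlgebra negQ,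
      (q⁻¹ • A) * (q⁻¹ • B) = (q⁻¹ * q⁻¹) • (A * B) := by
    intro A B
    rw [smul_mul_assoc, mul_smul_comm, smul_smul]
  have hone : ∀ a b : V7, negQ a = q → negQ b = q →
      (q⁻¹ • (CliffordAlgebra.ι negQ a * CliffordAlgebra.ι negQ b)) *
        (q⁻¹ • (CliffordAlgebra.ι negQ b * CliffordAlgebra.ι negQ a)) = 1 := by
    intro a b ha hb
    rw [smulmul, sq a b ha hb, Algebra.smul_def, ← map_mul, hq2, map_one]
  refine ⟨q⁻¹ • (CliffordAlgebra.ι negQ u * CliffordAlgebra.ι negQ v),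
      q⁻¹ • (CliffordAlgebra.ι negQ v * CliffordAlgebra.ι negQ u),
      hone u v hu hv, hone v u hv hu,
      Submodule.smul_mem _ _ (CliffordAlgebra.ι_mul_ι_mem_evenOdd_zero negQ u v), ?_, ?_, ?_⟩
  · have : CliffordAlgebra.reverse
        (q⁻¹ • (CliffordAlgebra.ι negQ u * CliffordAlgebra.ι negQ v))
        = q⁻¹ • (CliffordAlgebra.ι negQ v * CliffordAlgebra.ι negQ u) := by
      rw [map_smul, CliffordAlgebra.reverse.map_mul, CliffordAlgebra.reverse_ι,
        CliffordAlgebra.reverse_ι]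
    rw [this]
    exact hone u v hu hv
  · intro t
    refine ⟨(q⁻¹ * q⁻¹) • (QuadraticMap.polar negQ u
        (QuadraticMap.polar negQ v t • v - negQ v • t) • u
        - negQ u • (QuadraticMap.polar negQ v t • v - negQ v • t)), ?_⟩
    rw [map_smul, ← ι_conj, ← ι_conj]
    rw [smul_mul_assoc, smul_mul_assoc, mul_smul_comm, smul_smul]
    congr 1
    noncomm_ring
  · rw [map_smul, map_mul]
    simp only [θ, CliffordAlgebra.lift_ι_apply]
    rw [LinearMap.smul_apply, Module.End.mul_apply, key, smul_smul,
      inv_mul_cancel₀ hq, one_smul]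

theorem Bhat_sub_smul_left (a : ℂ) (p r q : W8) :
    Bhat (p - a • r) q = Bhat p q - a * Bhat r q := by
  simp only [Bhat_eq, Pi.sub_apply, Pi.smul_apply, smul_eq_mul]
  ring

theorem Bhat_add_left (p r q : W8) :
    Bhat (p + r) q = Bhat p q + Bhat r q := by
  simp only [Bhat_eq, Pi.add_apply]
  ring

/-- The `j`-th standard basis vector of `V`. -/
def eV (j : Fin 7) : V7 := fun i => if i = j then 1 else 0
/-- for each nonzero `c ∈ ℂ`, the level set `{x ∈ Ŵ | Q̂(x) = c}`
is a single orbit of the spin group of `−Q` (the invertible even elements `g`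
with `g·reverse(g) = 1` and `g·ι(V)·g⁻¹ ⊆ ι(V)`) acting on `Ŵ` via `θ`. -/
theorem statement_13 (c : ℂ) (hc : c ≠ 0) (x y : W8)
    (hx : Qhat x = c) (hy : Qhat y = c) :
    ∃ g g' : CliffordAlgebra negQ,
      g * g' = 1 ∧ g' * g = 1 ∧
      g ∈ CliffordAlgebra.evenOdd negQ 0 ∧
      g * CliffordAlgebra.reverse g = 1 ∧
      (∀ v : V7, ∃ u : V7,
        g * CliffordAlgebra.ι negQ v * g' = CliffordAlgebra.ι negQ u) ∧
      θ g x = y := by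
  obtain ⟨w, hw1, hw2⟩ : ∃ w : V7, Bhat (act w x) y = 0 ∧ negQ w ≠ 0 := by
    by_cases h3 : Bhat (act (eV 3) x) y = 0
    · exact ⟨eV 3, h3, by rw [negQ_eq]; simp [eV]⟩
    · by_cases h0 : Bhat (act (eV 0) x) y = 0
      · by_cases h6 : Bhat (act (eV 6) x) y = 0
        · refine ⟨eV 0 + eV 6, ?_, ?_⟩
          · rw [map_add, LinearMap.add_apply, Bhat_add_left, h0, h6, add_zero]
          · rw [negQ_eq]; simp [eV]
        · refine ⟨eV 3 - (Bhat (act (eV 3) x) y / Bhat (act (eV 6) x) y) • eV 6, ?_, ?_⟩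
          · rw [map_sub, map_smul, LinearMap.sub_apply, LinearMap.smul_apply,
              Bhat_sub_smul_left, div_mul_cancel₀ _ h6, sub_self]
          · rw [negQ_eq]; simp [eV]
      · refine ⟨eV 3 - (Bhat (act (eV 3) x) y / Bhat (act (eV 0) x) y) • eV 0, ?_, ?_⟩
        · rw [map_sub, map_smul, LinearMap.sub_apply, LinearMap.smul_apply,
            Bhat_sub_smul_left, div_mul_cancel₀ _ h0, sub_self]
        · rw [negQ_eq]; simp [eV]
  have hzx : Bhat (act w x) x = 0 := Bhat_act_self w x
  have hQz : Qhat (act w x) = -negQ w * c := by rw [Qhat_act, hx]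
  have hq : -c * Qhat (act w x) ≠ 0 := by
    rw [hQz]
    have h : -c * (-negQ w * c) = negQ w * (c * c) := by ring
    rw [h]
    exact mul_ne_zero hw2 (mul_ne_zero hc hc)
  have hvx : act (crossV (act w x) x) x = c • act w x := by rw [act_cross _ x hzx, hx]
  have huy : act (crossV (act w x) y) y = c • act w x := by rw [act_cross _ y hw1, hy]
  have hnv : negQ (crossV (act w x) x) = -c * Qhat (act w x) := by
    have h1 := Qhat_act (crossV (act w x) x) x
    rw [hvx, Qhat_smul, hx] at h1
    have h2 : -c * Qhat (act w x) * c = negQ (crossV (act w x) x) * c := by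
      linear_combination -h1
    exact (mul_right_cancel₀ hc h2).symm
  have hnu : negQ (crossV (act w x) y) = -c * Qhat (act w x) := by
    have h1 := Qhat_act (crossV (act w x) y) y
    rw [huy, Qhat_smul, hy] at h1
    have h2 : -c * Qhat (act w x) * c = negQ (crossV (act w x) y) * c := by
      linear_combination -h1
    exact (mul_right_cancel₀ hc h2).symm
  have key : act (crossV (act w x) y) (act (crossV (act w x) x) x)
      = (-c * Qhat (act w x)) • y := by
    have h2 : act (crossV (act w x) y) (act (crossV (act w x) y) y)
        = (-c * Qhat (act w x)) • y := by
      rw [act_act, hnu]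
    rw [huy] at h2
    rw [hvx]
    exact h2
  exact spin_orbit _ hq _ _ hnu hnv x y key



end
end SSD
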